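/- Let σ : (0, R] → (0, ∞) be differentiable and φ : (0, R] → [0, ∞) continuous with ∂_r log(σ(r)/(e^{ϑr} r^{n-1})) ≤ φ(r) for all r. Then for any 0 < t ≤ r ≤ R with r/(1+Λ²) ≤ t (where Λ ≥ 1), σ(r) ≤ (1+Λ²)^{n-1} e^{ϑ r Λ²/(1+Λ²)} (σ(t) + ∫_t^r φ(s) σ(s) ds). -/

import Mathlib

open Real Set

theorem area_element_estimate (n : ℕ) (hn : 2 ≤ n) (ϑ Λ R : ℝ)
    (hϑ : 0 ≤ ϑ) (hΛ : 1 ≤ Λ) (hR : 0 < R)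
    (σ φ : ℝ → ℝ)
    (hσpos : ∀ r ∈ Set.Ioc (0:ℝ) R, 0 < σ r)
    (hσd : ∀ r ∈ Set.Ioc (0:ℝ) R, DifferentiableAt ℝ σ r)
    (hφc : ContinuousOn φ (Set.Ioc 0 R))
    (hφ0 : ∀ r ∈ Set.Ioc (0:ℝ) R, 0 ≤ φ r)
    (hlog : ∀ r ∈ Set.Ioc (0:ℝ) R,
      deriv (fun x => Real.log (σ x / (Real.exp (ϑ * x) * x ^ (n - 1)))) r ≤ φ r) :
    ∀ t r : ℝ, 0 < t → t ≤ r → r ≤ R → r / (1 + Λ ^ 2) ≤ t →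
      σ r ≤ (1 + Λ ^ 2) ^ (n - 1) * Real.exp (ϑ * r * Λ ^ 2 / (1 + Λ ^ 2)) *
        (σ t + ∫ s in t..r, φ s * σ s) := by
  intro t r ht htr hrR htl
  set h : ℝ → ℝ := fun x => Real.exp (ϑ * x) * x ^ (n - 1) with hh
  set g : ℝ → ℝ := fun x => σ x / h x with hgdef
  have hΛ2 : (0:ℝ) < 1 + Λ ^ 2 := by positivity
  -- basic facts on Ioc 0 R
  have hhpos : ∀ x ∈ Set.Ioc (0:ℝ) R, 0 < h x := fun x hx => by
    have := hx.1; positivity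
  have hgpos : ∀ x ∈ Set.Ioc (0:ℝ) R, 0 < g x := fun x hx =>
    div_pos (hσpos x hx) (hhpos x hx)
  have hhd : ∀ x ∈ Set.Ioc (0:ℝ) R, DifferentiableAt ℝ h x := fun x hx => by
    apply DifferentiableAt.mul
    · exact (Real.differentiable_exp.differentiableAt).comp x
        ((differentiable_id.const_mul ϑ).differentiableAt)
    · exact differentiableAt_pow _
  have hgd : ∀ x ∈ Set.Ioc (0:ℝ) R, DifferentiableAt ℝ g x := fun x hx =>
    (hσd x hx).div (hhd x hx) (hhpos x hx).ne'
  -- derivative bound: deriv g x ≤ φ x * g x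
  have hderiv : ∀ x ∈ Set.Ioc (0:ℝ) R, deriv g x ≤ φ x * g x := by
    intro x hx
    have hgx := hgpos x hx
    have hlogd : HasDerivAt (fun y => Real.log (g y)) (deriv g x / g x) x :=
      ((hgd x hx).hasDerivAt).log hgx.ne'
    have := hlog x hx
    rw [show (fun y => Real.log (σ y / (Real.exp (ϑ * y) * y ^ (n - 1)))) =
        (fun y => Real.log (g y)) from rfl, hlogd.deriv] at this
    calc deriv g x = (deriv g x / g x) * g x := by field_simp
    _ ≤ φ x * g x := mul_le_mul_of_nonneg_right this hgx.le
  -- subset facts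
  have hsub : Set.Icc t r ⊆ Set.Ioc (0:ℝ) R := fun x hx =>
    ⟨lt_of_lt_of_le ht hx.1, le_trans hx.2 hrR⟩
  have htmem : t ∈ Set.Ioc (0:ℝ) R := ⟨ht, le_trans htr hrR⟩
  have hrmem : r ∈ Set.Ioc (0:ℝ) R := ⟨lt_of_lt_of_le ht htr, hrR⟩
  -- continuity of g and φ*g on Icc t r
  have hgc : ContinuousOn g (Set.Icc t r) := fun x hx =>
    ((hgd x (hsub hx)).continuousAt).continuousWithinAt
  have hφgc : ContinuousOn (fun s => φ s * g s) (Set.Icc t r) :=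
    (hφc.mono hsub).mul hgc
  have hφσc : ContinuousOn (fun s => φ s * σ s) (Set.Icc t r) := by
    refine (hφc.mono hsub).mul (fun x hx => ?_)
    exact ((hσd x (hsub hx)).continuousAt).continuousWithinAt
  have huIcc : Set.uIcc t r = Set.Icc t r := Set.uIcc_of_le htr
  have hφgint : IntervalIntegrable (fun s => φ s * g s) MeasureTheory.volume t r := by
    rw [intervalIntegrable_iff_integrableOn_Icc_of_le htr]
    exact hφgc.integrableOn_compact isCompact_Icc
  -- F antitone: g r ≤ g t + ∫ φ g
  have key : g r ≤ g t + ∫ s in t..r, φ s * g s := by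
    set F : ℝ → ℝ := fun x => g x - ∫ s in t..x, φ s * g s with hF
    have hFc : ContinuousOn F (Set.Icc t r) := by
      apply hgc.sub
      have := intervalIntegral.continuousOn_primitive_interval
        (μ := MeasureTheory.volume) (f := fun s => φ s * g s) (a := t) (b := r) ?_
      · rwa [huIcc] at this
      · rw [huIcc]; exact hφgc.integrableOn_compact isCompact_Icc
    have hFd : ∀ x ∈ Set.Ioo t r, HasDerivAt F (deriv g x - φ x * g x) x := by
      intro x hx
      have hxm : x ∈ Set.Ioc (0:ℝ) R := hsub ⟨hx.1.le, hx.2.le⟩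
      have hxo : x ∈ Set.Ioo (0:ℝ) R := ⟨hxm.1, lt_of_lt_of_le hx.2 hrR⟩
      have hcg : ContinuousOn (fun s => φ s * g s) (Set.Ioo (0:ℝ) R) := by
        apply ContinuousOn.mono _ Set.Ioo_subset_Ioc_self
        exact hφc.mul (fun y hy => ((hgd y hy).continuousAt).continuousWithinAt)
      have hint : IntervalIntegrable (fun s => φ s * g s) MeasureTheory.volume t x :=
        hφgint.mono_set (by rw [huIcc, Set.uIcc_of_le hx.1.le]; exact Set.Icc_subset_Icc_right hx.2.le)
      have hmeas := ContinuousOn.stronglyMeasurableAtFilter (μ := MeasureTheory.volume)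
        isOpen_Ioo hcg x hxo
      have hca : ContinuousAt (fun s => φ s * g s) x :=
        hcg.continuousAt (isOpen_Ioo.mem_nhds hxo)
      exact ((hgd x hxm).hasDerivAt).sub
        (intervalIntegral.integral_hasDerivAt_right hint hmeas hca)
    have hanti : AntitoneOn F (Set.Icc t r) := by
      apply antitoneOn_of_deriv_nonpos (convex_Icc t r) hFc
      · intro x hx
        rw [interior_Icc] at hx
        exact (hFd x hx).differentiableAt.differentiableWithinAt
      · intro x hx
        rw [interior_Icc] at hx
        rw [(hFd x hx).deriv]
        have := hderiv x (hsub ⟨hx.1.le, hx.2.le⟩)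
        linarith
    have := hanti (Set.left_mem_Icc.mpr htr) (Set.right_mem_Icc.mpr htr) htr
    simp only [hF, intervalIntegral.integral_same, sub_zero] at this
    linarith
  -- bound the integral: ∫ φ g ≤ (∫ φ σ) / h t
  have hht : 0 < h t := hhpos t htmem
  have hmono : ∀ s ∈ Set.Icc t r, h t ≤ h s := by
    intro s hs
    have hs0 : 0 < s := lt_of_lt_of_le ht hs.1
    apply mul_le_mul (Real.exp_le_exp.mpr (mul_le_mul_of_nonneg_left hs.1 hϑ))
      (pow_le_pow_left₀ ht.le hs.1 _) (by positivity) (Real.exp_pos _).le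
  have hintle : (∫ s in t..r, φ s * g s) ≤ (∫ s in t..r, φ s * σ s) / h t := by
    rw [← intervalIntegral.integral_div]
    apply intervalIntegral.integral_mono_on htr hφgint
    · rw [intervalIntegrable_iff_integrableOn_Icc_of_le htr]
      exact (hφσc.div_const _).integrableOn_compact isCompact_Icc
    · intro s hs
      have hsm := hsub hs
      have hφs := hφ0 s hsm
      have hσs := (hσpos s hsm).le
      have : g s ≤ σ s / h t :=
        div_le_div_of_nonneg_left hσs hht (hmono s hs)
      calc φ s * g s ≤ φ s * (σ s / h t) := mul_le_mul_of_nonneg_left this hφs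
      _ = φ s * σ s / h t := by ring
  -- ratio bound
  have hrt : r / t ≤ 1 + Λ ^ 2 := by
    rw [div_le_iff₀ ht]
    have h4 := (div_le_iff₀ hΛ2).mp htl
    linarith [mul_comm t (1 + Λ ^ 2)]
  have hratio : h r / h t ≤ (1 + Λ ^ 2) ^ (n - 1) * Real.exp (ϑ * r * Λ ^ 2 / (1 + Λ ^ 2)) := by
    have h1 : h r / h t = Real.exp (ϑ * r - ϑ * t) * (r / t) ^ (n - 1) := by
      rw [Real.exp_sub, div_pow]
      field_simp [hh]
      simp only [hh]
      ring
    rw [h1]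
    have h2 : Real.exp (ϑ * r - ϑ * t) ≤ Real.exp (ϑ * r * Λ ^ 2 / (1 + Λ ^ 2)) := by
      apply Real.exp_le_exp.mpr
      have : r - t ≤ r * Λ ^ 2 / (1 + Λ ^ 2) := by
        have : r / (1 + Λ ^ 2) ≤ t := htl
        have heq : r - r / (1 + Λ ^ 2) = r * Λ ^ 2 / (1 + Λ ^ 2) := by
          field_simp
          ring
        linarith
      calc ϑ * r - ϑ * t = ϑ * (r - t) := by ring
      _ ≤ ϑ * (r * Λ ^ 2 / (1 + Λ ^ 2)) := mul_le_mul_of_nonneg_left this hϑ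
      _ = ϑ * r * Λ ^ 2 / (1 + Λ ^ 2) := by ring
    have h3 : (r / t) ^ (n - 1) ≤ (1 + Λ ^ 2) ^ (n - 1) :=
      pow_le_pow_left₀ (div_nonneg (le_of_lt (lt_of_lt_of_le ht htr)) ht.le) hrt _
    calc Real.exp (ϑ * r - ϑ * t) * (r / t) ^ (n - 1)
        ≤ Real.exp (ϑ * r * Λ ^ 2 / (1 + Λ ^ 2)) * (1 + Λ ^ 2) ^ (n - 1) :=
          mul_le_mul h2 h3 (pow_nonneg (div_nonneg (le_of_lt (lt_of_lt_of_le ht htr)) ht.le) _) (Real.exp_pos _).le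
    _ = (1 + Λ ^ 2) ^ (n - 1) * Real.exp (ϑ * r * Λ ^ 2 / (1 + Λ ^ 2)) := by ring
  -- assemble
  have hIpos : 0 ≤ ∫ s in t..r, φ s * σ s := by
    apply intervalIntegral.integral_nonneg htr
    intro s hs
    exact mul_nonneg (hφ0 s (hsub hs)) (hσpos s (hsub hs)).le
  have hσt := hσpos t htmem
  have hhr : 0 < h r := hhpos r hrmem
  have hσr : σ r = g r * h r := by
    rw [hgdef]; field_simp
  have hfinal : σ r ≤ (h r / h t) * (σ t + ∫ s in t..r, φ s * σ s) := by
    rw [hσr]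
    have : g r ≤ (σ t + ∫ s in t..r, φ s * σ s) / h t := by
      have hgt : g t = σ t / h t := rfl
      calc g r ≤ g t + ∫ s in t..r, φ s * g s := key
      _ ≤ σ t / h t + (∫ s in t..r, φ s * σ s) / h t := by rw [hgt]; linarith
      _ = (σ t + ∫ s in t..r, φ s * σ s) / h t := by ring
    calc g r * h r ≤ ((σ t + ∫ s in t..r, φ s * σ s) / h t) * h r :=
      mul_le_mul_of_nonneg_right this hhr.le
    _ = (h r / h t) * (σ t + ∫ s in t..r, φ s * σ s) := by ring
  calc σ r ≤ (h r / h t) * (σ t + ∫ s in t..r, φ s * σ s) := hfinal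
  _ ≤ ((1 + Λ ^ 2) ^ (n - 1) * Real.exp (ϑ * r * Λ ^ 2 / (1 + Λ ^ 2))) *
      (σ t + ∫ s in t..r, φ s * σ s) :=
    mul_le_mul_of_nonneg_right hratio (by linarith)
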